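/- In the weighted plurality election of the previous construction (votes a ≻ p ≻ b with weights w₁,…,wₙ summing to 2K, a vote b ≻ p ≻ a of weight 3K, a vote p ≻ a ≻ b of weight 2K+1, tie-breaking a ≻ b ≻ p), suppose we may change only votes from the W-group subject to a total changed weight of at most K. Then p can be made the winner if and only if there exists W' ⊆ W with ∑_{w∈W'} w = K. -/
import Mathlib

inductive Cand : Type
  | p | a | b
deriving DecidableEq

open Cand

/-- Weighted plurality score: total weight of the votes ranking `x` first. -/
def plScore (E : Multiset (ℕ × List Cand)) (x : Cand) : ℕ :=
  (E.map fun v => if v.2.head? = some x then v.1 else 0).sum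

/-- `x` wins w.r.t. a score function and a tie-breaking priority order. -/
def Wins {S : Type} [LinearOrder S] (score : Cand → S) (prio : Cand → ℕ) (x : Cand) : Prop :=
  ∀ y, y ≠ x → score y < score x ∨ (score y = score x ∧ prio x < prio y)

/-- Tie-breaking order `a ≻ b ≻ p`. -/
def prioABP : Cand → ℕ
  | Cand.a => 0
  | Cand.b => 1
  | Cand.p => 2

lemma plScore_add (A B : Multiset (ℕ × List Cand)) (x : Cand) :
    plScore (A + B) x = plScore A x + plScore B x := by
  simp [plScore]

lemma plScore_map (M : Multiset ℕ) (l : List Cand) (x : Cand) :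
    plScore (M.map (fun w => (w, l))) x = if l.head? = some x then M.sum else 0 := by
  simp only [plScore, Multiset.map_map, Function.comp]
  split <;> simp_all

lemma plScore_le (V : Multiset (ℕ × List Cand)) (x : Cand) :
    plScore V x ≤ (V.map Prod.fst).sum := by
  apply Multiset.sum_map_le_sum_map
  intro v _
  split <;> simp

/-- In the election with `W`-votes `a ≻ p ≻ b` (`∑ W = 2K`), a vote `b ≻ p ≻ a` of weight
`3K` and a vote `p ≻ a ≻ b` of weight `2K+1` (tie-breaking `a ≻ b ≻ p`), one may change
only `W`-votes of total changed weight at most `K` (to arbitrary linear orders): `p` can be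
made the plurality winner iff some sub-multiset of `W` sums to exactly `K`. -/
theorem stmt_3 (K : ℕ) (hK : 0 < K) (W : Multiset ℕ)
    (hpos : ∀ w ∈ W, 0 < w) (hsum : W.sum = 2 * K) :
    (∃ Wc ≤ W, Wc.sum ≤ K ∧
      ∃ V : Multiset (ℕ × List Cand), V.map Prod.fst = Wc ∧
        (∀ v ∈ V, v.2.Perm [p, a, b]) ∧
        Wins (plScore ((W - Wc).map (fun w => (w, [a, p, b])) + V +
          {(3 * K, [b, p, a]), (2 * K + 1, [p, a, b])})) prioABP p) ↔
    (∃ W' ≤ W, W'.sum = K) := by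
  constructor
  · rintro ⟨Wc, hle, hsumle, V, hmap, -, hwin⟩
    refine ⟨Wc, hle, ?_⟩
    have hb := hwin b (by simp)
    have hS : plScore ({(3 * K, [b, p, a]), (2 * K + 1, [p, a, b])} : Multiset (ℕ × List Cand)) b = 3 * K := by
      simp [plScore]
    have hSp : plScore ({(3 * K, [b, p, a]), (2 * K + 1, [p, a, b])} : Multiset (ℕ × List Cand)) p = 2 * K + 1 := by
      simp [plScore]
    rw [plScore_add, plScore_add, plScore_add, plScore_add, plScore_map, plScore_map,
      hS, hSp] at hb
    have hvp : plScore V p ≤ Wc.sum := hmap ▸ plScore_le V p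
    simp [prioABP] at hb
    omega
  · rintro ⟨W', hle, hsum'⟩
    refine ⟨W', hle, le_of_eq hsum', W'.map (fun w => (w, [p, a, b])), by simp, ?_, ?_⟩
    · intro v hv
      simp only [Multiset.mem_map] at hv
      obtain ⟨w, -, rfl⟩ := hv
      exact List.Perm.refl _
    · have hWW : (W - W').sum = K := by
        have h2 : (W - W') + W' = W := tsub_add_cancel_of_le hle
        have h3 : (W - W').sum + W'.sum = W.sum := by rw [← Multiset.sum_add, h2]
        omega
      intro y hy
      left
      cases y with
      | p => exact absurd rfl hy
      | a =>
        rw [plScore_add, plScore_add, plScore_add, plScore_add, plScore_map, plScore_map, plScore_map]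
        simp [plScore, hWW, hsum']
      | b =>
        rw [plScore_add, plScore_add, plScore_add, plScore_add, plScore_map, plScore_map, plScore_map]
        simp [plScore, hWW, hsum']
        omega
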